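/- Let w ≥ 0 be an integer. In the formal power series ring ℤ[q][[t]], the generating function of secant-type path diagrams bounded in a slit of width w equals the finite continued fraction G'_w(t,q): that is, Σ_{N=0}^∞ t^{2N} · Σ_u Σ_s q^{weight(s)} = G'_w(t,q), where the middle sum runs over all Dyck paths u of half-length N with height at most w and the inner sum runs over all secant-type path diagrams s on u. -/

import Mathlib

/-!
STATEMENT 1: the generating function of secant-type path diagrams bounded in a
slit of width `w` equals the finite continued fraction `G'_w(t,q)` in `ℤ[q][[t]]`.
-/

open Finset

/-- The `q`-integer `[n]_q = 1 + q + ⋯ + q^{n-1}` in `ℤ[q]`. -/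
noncomputable def qInt (n : ℕ) : Polynomial ℤ := ∑ i ∈ Finset.range n, Polynomial.X ^ i

/-- A step, encoded by a Boolean: `true` is a `+1` (northeast) step, `false` a `-1`
(southeast) step. -/
def stepVal (b : Bool) : ℤ := if b then 1 else -1

/-- The partial sum `u_1 + ⋯ + u_j` of the first `j` steps; `psum u j` is the
starting height of step `j+1`. -/
def psum {n : ℕ} (u : Fin n → Bool) (j : ℕ) : ℤ :=
  ∑ i ∈ Finset.univ.filter (fun i : Fin n => (i : ℕ) < j), stepVal (u i)

/-- `u` is a Dyck path of half-length `N` whose height is at most `w`: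
all partial sums are nonnegative, the total sum is `0`, and all partial sums are `≤ w`. -/
def IsDyckLe (N w : ℕ) (u : Fin (2 * N) → Bool) : Prop :=
  (∀ j ≤ 2 * N, 0 ≤ psum u j) ∧ psum u (2 * N) = 0 ∧ (∀ j ≤ 2 * N, psum u j ≤ (w : ℤ))

/-- `s` is a secant-type path diagram on the Dyck path `u`: `0 ≤ s_j ≤ h_j` if step `j`
goes up, and `0 ≤ s_j ≤ h_j - 1` if step `j` goes down (the upper bound `2N` on the
codomain of `s` is harmless since `h_j ≤ 2N`). -/
def IsSecantDiagram {N : ℕ} (u : Fin (2 * N) → Bool) (s : Fin (2 * N) → Fin (2 * N + 1)) :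
    Prop :=
  ∀ j : Fin (2 * N),
    if u j then ((s j : ℕ) : ℤ) ≤ psum u (j : ℕ) else ((s j : ℕ) : ℤ) ≤ psum u (j : ℕ) - 1

open scoped Classical in
/-- The generating function `Σ_N t^{2N} Σ_u Σ_s q^{weight(s)} ∈ ℤ[q][[t]]`, where `u` runs
over Dyck paths of half-length `N` of height at most `w` and `s` over secant-type path
diagrams on `u`. -/
noncomputable def secantGF (w : ℕ) : PowerSeries (Polynomial ℤ) :=
  PowerSeries.mk fun n =>
    if n % 2 = 0 then
      ∑ p ∈ Finset.univ.filter
          (fun p : (Fin (2 * (n / 2)) → Bool) × (Fin (2 * (n / 2)) → Fin (2 * (n / 2) + 1)) =>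
            IsDyckLe (n / 2) w p.1 ∧ IsSecantDiagram p.1 p.2),
        Polynomial.X ^ (∑ j, (p.2 j : ℕ))
    else 0

/-- `hAux' w k` is the continued-fraction level `h_{w+1-k}`:
`h_{w+1} = 1` and `h_j = 1 - [j]_q² t² / h_{j+1}` for `1 ≤ j ≤ w`. -/
noncomputable def hAux' (w : ℕ) : ℕ → PowerSeries (Polynomial ℤ)
  | 0 => 1
  | k + 1 => 1 - PowerSeries.C (qInt (w - k) ^ 2) *
      PowerSeries.X ^ 2 * Ring.inverse (hAux' w k)

/-- The finite continued fraction `G'_w(t,q) = 1 / h_1 ∈ ℤ[q][[t]]`. -/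
noncomputable def Gcf' (w : ℕ) : PowerSeries (Polynomial ℤ) := Ring.inverse (hAux' w w)


namespace SecantAux
open PowerSeries


lemma psum_eq {n : ℕ} (u : Fin n → Bool) (j : ℕ) :
    psum u j = ∑ i : Fin n, if (i : ℕ) < j then stepVal (u i) else 0 := by
  rw [psum, Finset.sum_filter]

lemma psum_zero {n : ℕ} (u : Fin n → Bool) : psum u 0 = 0 := by
  simp [psum_eq]

lemma psum_cons {n : ℕ} (b : Bool) (u : Fin n → Bool) (j : ℕ) :
    psum (Fin.cons b u : Fin (n+1) → Bool) (j + 1) = stepVal b + psum u j := by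
  rw [psum_eq, psum_eq, Fin.sum_univ_succ]
  simp [Fin.cons_succ, Nat.succ_lt_succ_iff]

lemma psum_le {n : ℕ} (u : Fin n → Bool) (j : ℕ) : psum u j ≤ (n : ℤ) := by
  rw [psum]
  calc ∑ i ∈ Finset.univ.filter (fun i : Fin n => (i : ℕ) < j), stepVal (u i)
      ≤ ∑ _i ∈ Finset.univ.filter (fun i : Fin n => (i : ℕ) < j), (1 : ℤ) := by
        apply Finset.sum_le_sum; intro i _; cases u i <;> simp [stepVal]
    _ = ((Finset.univ.filter (fun i : Fin n => (i : ℕ) < j)).card : ℤ) := by simp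
    _ ≤ (n : ℤ) := by
        have := Finset.card_filter_le (Finset.univ : Finset (Fin n))
          (fun i : Fin n => (i : ℕ) < j)
        simp at this
        exact_mod_cast this

/-- walks from height `h` to `0` staying in `[0, w]`. -/
def IsWalk (w h : ℕ) {n : ℕ} (u : Fin n → Bool) : Prop :=
  (∀ j ≤ n, 0 ≤ (h : ℤ) + psum u j) ∧ (h : ℤ) + psum u n = 0 ∧
    (∀ j ≤ n, (h : ℤ) + psum u j ≤ (w : ℤ))

/-- weight of a walk starting at height `h`. -/
noncomputable def wgt (h : ℕ) {n : ℕ} (u : Fin n → Bool) : Polynomial ℤ :=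
  ∏ j : Fin n, qInt (((h : ℤ) + psum u (j : ℕ)).toNat + (if u j then 1 else 0))

open scoped Classical in
noncomputable def cnt (w h n : ℕ) : Polynomial ℤ :=
  ∑ u ∈ Finset.univ.filter (fun u : Fin n → Bool => IsWalk w h u), wgt h u

lemma cnt_zero (w h : ℕ) : cnt w h 0 = if h = 0 then 1 else 0 := by
  classical
  rw [cnt]
  have hps : ∀ (u : Fin 0 → Bool) (j : ℕ), psum u j = 0 := fun u j => by
    rw [psum_eq]; simp
  by_cases h0 : h = 0
  · subst h0
    rw [if_pos rfl, Finset.filter_true_of_mem (fun u _ => ?_)]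
    · simp [wgt]
    · refine ⟨fun j _ => by simp [hps], by simp [hps], fun j _ => by simp [hps]⟩
  · rw [if_neg h0]
    apply Finset.sum_eq_zero
    intro u hu
    rw [Finset.mem_filter] at hu
    have := hu.2.2.1
    rw [hps] at this
    exact absurd (by exact_mod_cast this : h = 0) h0

lemma cnt_of_gt {w h : ℕ} (hgt : w < h) (n : ℕ) : cnt w h n = 0 := by
  classical
  rw [cnt]
  apply Finset.sum_eq_zero
  intro u hu
  rw [Finset.mem_filter] at hu
  have := hu.2.2.2 0 (Nat.zero_le _)
  rw [psum_zero] at this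
  exact absurd (by exact_mod_cast this : h ≤ w) (by omega)

lemma walk_cons_true {n : ℕ} (w h : ℕ) (u' : Fin n → Bool) :
    IsWalk w h (Fin.cons true u' : Fin (n+1) → Bool) ↔ IsWalk w (h + 1) u' := by
  have e : ∀ j : ℕ, (h : ℤ) + psum (Fin.cons true u' : Fin (n+1) → Bool) (j+1)
      = ((h + 1 : ℕ) : ℤ) + psum u' j := by
    intro j; rw [psum_cons]; simp [stepVal]; ring
  unfold IsWalk
  constructor
  · rintro ⟨h1, h2, h3⟩
    refine ⟨fun j hj => ?_, ?_, fun j hj => ?_⟩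
    · have := h1 (j+1) (by omega); rwa [e] at this
    · have := h2; rwa [e] at this
    · have := h3 (j+1) (by omega); rwa [e] at this
  · rintro ⟨h1, h2, h3⟩
    have hw : (h : ℤ) ≤ (w : ℤ) := by
      have := h3 0 (Nat.zero_le _); rw [psum_zero] at this; push_cast at this ⊢; omega
    refine ⟨fun j hj => ?_, ?_, fun j hj => ?_⟩
    · cases j with
      | zero => rw [psum_zero]; positivity
      | succ j => rw [e]; exact h1 j (by omega)
    · rw [e]; exact h2
    · cases j with
      | zero => rw [psum_zero]; simpa using hw
      | succ j => rw [e]; exact h3 j (by omega)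

lemma walk_cons_false {n : ℕ} (w h : ℕ) (u' : Fin n → Bool) :
    IsWalk w h (Fin.cons false u' : Fin (n+1) → Bool) ↔
      (1 ≤ h ∧ h ≤ w ∧ IsWalk w (h - 1) u') := by
  constructor
  · rintro ⟨h1, h2, h3⟩
    have hh1 : 1 ≤ h := by
      have := h1 1 (by omega)
      rw [show psum (Fin.cons false u' : Fin (n+1) → Bool) 1
          = stepVal false + psum u' 0 from psum_cons false u' 0, psum_zero] at this
      simp [stepVal] at this
      exact_mod_cast this
    have e : ∀ j : ℕ, (h : ℤ) + psum (Fin.cons false u' : Fin (n+1) → Bool) (j+1)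
        = ((h - 1 : ℕ) : ℤ) + psum u' j := by
      intro j; rw [psum_cons]; simp [stepVal]; push_cast [Nat.cast_sub hh1]; ring
    have hhw : h ≤ w := by
      have := h3 0 (Nat.zero_le _); rw [psum_zero] at this; exact_mod_cast (by omega : (h:ℤ) ≤ w)
    refine ⟨hh1, hhw, fun j hj => ?_, ?_, fun j hj => ?_⟩
    · have := h1 (j+1) (by omega); rwa [e] at this
    · have := h2; rwa [e] at this
    · have := h3 (j+1) (by omega); rwa [e] at this
  · rintro ⟨hh1, hhw, h1, h2, h3⟩
    have e : ∀ j : ℕ, (h : ℤ) + psum (Fin.cons false u' : Fin (n+1) → Bool) (j+1)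
        = ((h - 1 : ℕ) : ℤ) + psum u' j := by
      intro j; rw [psum_cons]; simp [stepVal]; push_cast [Nat.cast_sub hh1]; ring
    refine ⟨fun j hj => ?_, ?_, fun j hj => ?_⟩
    · cases j with
      | zero => rw [psum_zero]; positivity
      | succ j => rw [e]; exact h1 j (by omega)
    · rw [e]; exact h2
    · cases j with
      | zero => rw [psum_zero]; push_cast; omega
      | succ j => rw [e]; exact h3 j (by omega)





lemma wgt_cons_true {n : ℕ} (h : ℕ) (u' : Fin n → Bool) :
    wgt h (Fin.cons true u' : Fin (n+1) → Bool) = qInt (h + 1) * wgt (h + 1) u' := by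
  rw [wgt, wgt, Fin.prod_univ_succ]
  congr 1
  · simp [psum_zero]
  · apply Finset.prod_congr rfl
    intro j _
    rw [Fin.cons_succ]
    congr 2
    rw [Fin.val_succ, psum_cons]
    simp [stepVal]
    push_cast
    ring

lemma wgt_cons_false {n : ℕ} {h : ℕ} (hh1 : 1 ≤ h) (u' : Fin n → Bool) :
    wgt h (Fin.cons false u' : Fin (n+1) → Bool) = qInt h * wgt (h - 1) u' := by
  rw [wgt, wgt, Fin.prod_univ_succ]
  congr 1
  · simp [psum_zero]
  · apply Finset.prod_congr rfl
    intro j _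
    rw [Fin.cons_succ]
    congr 2
    rw [Fin.val_succ, psum_cons]
    simp [stepVal]
    push_cast [Nat.cast_sub hh1]
    ring

lemma cnt_succ (w h n : ℕ) :
    cnt w h (n + 1) = qInt (h + 1) * cnt w (h + 1) n +
      (if 1 ≤ h ∧ h ≤ w then qInt h * cnt w (h - 1) n else 0) := by
  classical
  rw [cnt, Finset.sum_filter,
    ← Equiv.sum_comp (Fin.consEquiv (fun _ : Fin (n+1) => Bool))
      (fun u => if IsWalk w h u then wgt h u else 0),
    Fintype.sum_prod_type, Fintype.sum_bool]
  have htrue : ∀ u' : Fin n → Bool,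
      (if IsWalk w h ((Fin.consEquiv (fun _ : Fin (n+1) => Bool)) (true, u'))
        then wgt h ((Fin.consEquiv (fun _ : Fin (n+1) => Bool)) (true, u')) else 0)
      = (if IsWalk w (h+1) u' then qInt (h+1) * wgt (h+1) u' else 0) := by
    intro u'
    have e : (Fin.consEquiv (fun _ : Fin (n+1) => Bool)) (true, u')
        = (Fin.cons true u' : Fin (n+1) → Bool) := rfl
    rw [e]
    by_cases hw : IsWalk w (h+1) u'
    · rw [if_pos ((walk_cons_true w h u').mpr hw), if_pos hw, wgt_cons_true]
    · rw [if_neg (fun hc => hw ((walk_cons_true w h u').mp hc)), if_neg hw]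
  have hfalse : ∀ u' : Fin n → Bool,
      (if IsWalk w h ((Fin.consEquiv (fun _ : Fin (n+1) => Bool)) (false, u'))
        then wgt h ((Fin.consEquiv (fun _ : Fin (n+1) => Bool)) (false, u')) else 0)
      = (if 1 ≤ h ∧ h ≤ w then (if IsWalk w (h-1) u' then qInt h * wgt (h-1) u' else 0) else 0) := by
    intro u'
    have e : (Fin.consEquiv (fun _ : Fin (n+1) => Bool)) (false, u')
        = (Fin.cons false u' : Fin (n+1) → Bool) := rfl
    rw [e]
    by_cases hc : 1 ≤ h ∧ h ≤ w
    · rw [if_pos hc]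
      by_cases hw : IsWalk w (h-1) u'
      · rw [if_pos ((walk_cons_false w h u').mpr ⟨hc.1, hc.2, hw⟩), if_pos hw,
          wgt_cons_false hc.1]
      · rw [if_neg (fun hx => hw ((walk_cons_false w h u').mp hx).2.2), if_neg hw]
    · rw [if_neg hc, if_neg (fun hx => by
        have := (walk_cons_false w h u').mp hx
        exact hc ⟨this.1, this.2.1⟩)]
  rw [Finset.sum_congr rfl (fun u' _ => htrue u'), Finset.sum_congr rfl (fun u' _ => hfalse u')]
  congr 1
  · rw [cnt, Finset.sum_filter, Finset.mul_sum]
    apply Finset.sum_congr rfl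
    intro u' _
    split_ifs <;> simp
  · by_cases hc : 1 ≤ h ∧ h ≤ w
    · simp only [if_pos hc]
      rw [cnt, Finset.sum_filter, Finset.mul_sum]
      apply Finset.sum_congr rfl
      intro u' _
      split_ifs <;> simp
    · simp only [if_neg hc, Finset.sum_const_zero]




lemma cnt_parity (w : ℕ) : ∀ n h, (h + n) % 2 = 1 → cnt w h n = 0 := by
  intro n
  induction n with
  | zero => intro h hp; rw [cnt_zero, if_neg (by omega)]
  | succ n ih =>
    intro h hp
    rw [cnt_succ, ih (h+1) (by omega), mul_zero, zero_add]
    by_cases hc : 1 ≤ h ∧ h ≤ w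
    · rw [if_pos hc, ih (h-1) (by omega), mul_zero]
    · rw [if_neg hc]

noncomputable def V (w h : ℕ) : PowerSeries (Polynomial ℤ) := PowerSeries.mk (cnt w h)

lemma V_rec (w h : ℕ) :
    V w h = (if h = 0 then 1 else 0) + X * C (qInt (h+1)) * V w (h+1)
      + (if 1 ≤ h ∧ h ≤ w then X * C (qInt h) * V w (h-1) else 0) := by
  have assoc : ∀ (a : Polynomial ℤ) (f : PowerSeries (Polynomial ℤ)),
      X * C a * f = C a * (X * f) := by intro a f; ring
  refine PowerSeries.ext fun n => ?_
  cases n with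
  | zero =>
    simp only [map_add, coeff_zero_eq_constantCoeff, V, constantCoeff_mk, cnt_zero]
    split_ifs <;>
      simp_all [assoc, map_mul, constantCoeff_X]
  | succ n =>
    have h1 : (coeff (n+1)) ((if h = 0 then 1 else 0) :
        PowerSeries (Polynomial ℤ)) = 0 := by
      split_ifs <;> simp [PowerSeries.coeff_one]
    have h2 : (coeff (n+1)) (X * C (qInt (h+1)) * V w (h+1))
        = qInt (h+1) * cnt w (h+1) n := by
      rw [assoc, PowerSeries.coeff_C_mul, PowerSeries.coeff_succ_X_mul, V, coeff_mk]
    have h3 : (coeff (n+1)) ((if 1 ≤ h ∧ h ≤ w then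
        X * C (qInt h) * V w (h-1) else 0))
        = (if 1 ≤ h ∧ h ≤ w then qInt h * cnt w (h-1) n else 0) := by
      split_ifs
      · rw [assoc, PowerSeries.coeff_C_mul, PowerSeries.coeff_succ_X_mul, V, coeff_mk]
      · simp
    rw [map_add, map_add, h1, h2, h3, zero_add, V, coeff_mk, cnt_succ]

lemma constantCoeff_hAux (w k : ℕ) :
    PowerSeries.constantCoeff (hAux' w k) = 1 := by
  cases k with
  | zero => simp [hAux']
  | succ k => simp [hAux', map_sub, map_mul, constantCoeff_X]

lemma isUnit_hAux (w k : ℕ) : IsUnit (hAux' w k) :=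
  PowerSeries.isUnit_iff_constantCoeff.mpr (by rw [constantCoeff_hAux]; exact isUnit_one)

lemma V_top (w : ℕ) : V w (w + 1) = 0 := by
  ext n; simp [V, cnt_of_gt (Nat.lt_succ_self w)]

lemma key (w : ℕ) : ∀ k h, h = w - k → 1 ≤ h →
    hAux' w k * V w h = X * C (qInt h) * V w (h - 1) := by
  intro k
  induction k with
  | zero =>
    intro h hh h1
    have hw : h = w := by omega
    subst hw
    rw [show hAux' h 0 = 1 from rfl, one_mul, V_rec h h, V_top h, mul_zero,
      if_neg (by omega), if_pos ⟨h1, le_refl h⟩]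
    ring
  | succ k ih =>
    intro h hh h1
    have hkw : k + 1 ≤ w := by omega
    have ihh := ih (h + 1) (by omega) (by omega)
    simp only [Nat.add_sub_cancel] at ihh
    have hrec := V_rec w h
    rw [if_neg (by omega), if_pos ⟨h1, by omega⟩, zero_add] at hrec
    have hu := isUnit_hAux w k
    have hinv : Ring.inverse (hAux' w k) * hAux' w k = 1 := Ring.inverse_mul_cancel _ hu
    have hwk : w - k = h + 1 := by omega
    have hA : C (qInt (h+1) ^ 2) * X ^ 2 * Ring.inverse (hAux' w k) * V w h
        = X * C (qInt (h+1)) * V w (h+1) := by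
      have e1 : C (qInt (h+1) ^ 2) * X ^ 2 * Ring.inverse (hAux' w k) * V w h
          = Ring.inverse (hAux' w k) * X * (X * C (qInt (h+1)) ^ 2 * V w h) := by
        rw [map_pow]; ring
      rw [e1, show X * C (qInt (h+1)) ^ 2 * V w h
          = C (qInt (h+1)) * (X * C (qInt (h+1)) * V w h)
          from by ring, ← ihh,
        show Ring.inverse (hAux' w k) * X *
            (C (qInt (h+1)) * (hAux' w k * V w (h+1)))
          = (Ring.inverse (hAux' w k) * hAux' w k) *
            (X * C (qInt (h+1)) * V w (h+1)) from by ring,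
        hinv, one_mul]
    show (1 - C (qInt (w - k) ^ 2) * X ^ 2 * Ring.inverse (hAux' w k)) * V w h
        = _
    rw [hwk, sub_mul, one_mul, hA, hrec]
    ring

lemma V_zero_eq_one (w : ℕ) : hAux' w w * V w 0 = 1 := by
  cases w with
  | zero =>
    rw [show hAux' 0 0 = 1 from rfl, one_mul, V_rec 0 0, V_top 0]
    norm_num
  | succ w =>
    have hkey := key (w+1) w 1 (by omega) (le_refl 1)
    have hrec := V_rec (w+1) 0
    rw [if_pos rfl, if_neg (by omega), add_zero] at hrec
    have hu := isUnit_hAux (w+1) w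
    have hinv : Ring.inverse (hAux' (w+1) w) * hAux' (w+1) w = 1 := Ring.inverse_mul_cancel _ hu
    show (1 - C (qInt ((w+1) - w) ^ 2) * X ^ 2 * Ring.inverse (hAux' (w+1) w))
        * V (w+1) 0 = 1
    have hww : (w + 1) - w = 1 := by omega
    have hA : C (qInt 1 ^ 2) * X ^ 2 * Ring.inverse (hAux' (w+1) w) * V (w+1) 0
        = X * C (qInt 1) * V (w+1) 1 := by
      have e1 : C (qInt 1 ^ 2) * X ^ 2 * Ring.inverse (hAux' (w+1) w) * V (w+1) 0
          = Ring.inverse (hAux' (w+1) w) * X *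
            (C (qInt 1) * (X * C (qInt 1) * V (w+1) 0)) := by
        rw [map_pow]; ring
      rw [e1, show (1:ℕ) - 1 = 0 from rfl] at *
      rw [← hkey,
        show Ring.inverse (hAux' (w+1) w) * X *
            (C (qInt 1) * (hAux' (w+1) w * V (w+1) 1))
          = (Ring.inverse (hAux' (w+1) w) * hAux' (w+1) w) *
            (X * C (qInt 1) * V (w+1) 1) from by ring,
        hinv, one_mul]
    rw [hww, sub_mul, one_mul, hA, hrec]
    ring

lemma V_eq_Gcf (w : ℕ) : V w 0 = Gcf' w := by
  have h := V_zero_eq_one w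
  have hinv : Ring.inverse (hAux' w w) * hAux' w w = 1 :=
    Ring.inverse_mul_cancel _ (isUnit_hAux w w)
  calc V w 0 = (Ring.inverse (hAux' w w) * hAux' w w) * V w 0 := by rw [hinv, one_mul]
    _ = Ring.inverse (hAux' w w) * (hAux' w w * V w 0) := by ring
    _ = Gcf' w := by rw [h, mul_one, Gcf']



lemma dyck_iff_walk (N w : ℕ) (u : Fin (2*N) → Bool) : IsDyckLe N w u ↔ IsWalk w 0 u := by
  unfold IsDyckLe IsWalk
  simp only [Nat.cast_zero, zero_add]

open scoped Classical in
lemma sum_secant (N w : ℕ) (u : Fin (2*N) → Bool) (hd : IsDyckLe N w u) :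
    ∑ s : Fin (2*N) → Fin (2*N+1),
      (if IsSecantDiagram u s then (Polynomial.X : Polynomial ℤ) ^ (∑ j, (s j : ℕ)) else 0)
    = wgt 0 u := by
  classical
  set b : Fin (2*N) → ℕ :=
    fun j => (((0:ℕ) : ℤ) + psum u (j : ℕ)).toNat + (if u j then 1 else 0) with hbdef
  have hwgt : wgt 0 u = ∏ j, qInt (b j) := rfl
  have hnonneg : ∀ j : Fin (2*N), 0 ≤ psum u (j : ℕ) := fun j => hd.1 j (le_of_lt j.isLt)
  have hble : ∀ j : Fin (2*N), b j ≤ 2*N + 1 := by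
    intro j
    have h2 := psum_le u (j : ℕ)
    have h1 := hnonneg j
    show (((0:ℕ) : ℤ) + psum u (j : ℕ)).toNat + (if u j then 1 else 0) ≤ 2*N + 1
    split_ifs <;> push_cast at h2 <;> omega
  have hchar : ∀ s : Fin (2*N) → Fin (2*N+1),
      IsSecantDiagram u s ↔ ∀ j, (s j : ℕ) < b j := by
    intro s
    unfold IsSecantDiagram
    apply forall_congr'
    intro j
    have h1 := hnonneg j
    simp only [hbdef]
    cases hu : u j <;> simp [hu] <;> omega
  have step1 : wgt 0 u = ∑ f ∈ Fintype.piFinset (fun j => Finset.range (b j)),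
      (Polynomial.X : Polynomial ℤ) ^ (∑ j, f j) := by
    rw [hwgt]
    unfold qInt
    rw [Finset.prod_univ_sum]
    apply Finset.sum_congr rfl
    intro f _
    rw [Finset.prod_pow_eq_pow_sum]
  rw [step1, ← Finset.sum_filter]
  apply Finset.sum_nbij' (i := fun s : Fin (2*N) → Fin (2*N+1) => fun j => (s j : ℕ))
    (j := fun f : Fin (2*N) → ℕ => fun j => (⟨min (f j) (2*N), by omega⟩ : Fin (2*N+1)))
  · intro s hs
    rw [Finset.mem_filter] at hs
    rw [Fintype.mem_piFinset]
    intro j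
    rw [Finset.mem_range]
    exact (hchar s).mp hs.2 j
  · intro f hf
    rw [Fintype.mem_piFinset] at hf
    rw [Finset.mem_filter]
    refine ⟨Finset.mem_univ _, (hchar _).mpr fun k => ?_⟩
    have h1 := Finset.mem_range.mp (hf k)
    have h2 := hble k
    simpa using (by omega : min (f k) (2*N) < b k)
  · intro s hs
    funext j
    have hlt := (s j).isLt
    exact Fin.ext (by simp; omega)
  · intro f hf
    rw [Fintype.mem_piFinset] at hf
    funext j
    have h1 := Finset.mem_range.mp (hf j)
    have h2 := hble j
    simp; omega
  · intro s _; rfl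



open scoped Classical in
lemma secantGF_coeff (w N : ℕ) :
    (∑ p ∈ Finset.univ.filter
        (fun p : (Fin (2*N) → Bool) × (Fin (2*N) → Fin (2*N + 1)) =>
          IsDyckLe N w p.1 ∧ IsSecantDiagram p.1 p.2),
      Polynomial.X ^ (∑ j, (p.2 j : ℕ))) = cnt w 0 (2*N) := by
  rw [Finset.sum_filter, Fintype.sum_prod_type]
  rw [cnt, Finset.sum_filter]
  apply Finset.sum_congr rfl
  intro u _
  by_cases hd : IsDyckLe N w u
  · rw [if_pos ((dyck_iff_walk N w u).mp hd), ← sum_secant N w u hd]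
    apply Finset.sum_congr rfl
    intro s _
    simp [hd]
  · rw [if_neg (fun hw => hd ((dyck_iff_walk N w u).mpr hw))]
    apply Finset.sum_eq_zero
    intro s _
    rw [if_neg (fun hc => hd hc.1)]

end SecantAux

open SecantAux in
/-- For every integer `w ≥ 0`, the generating function of secant-type path diagrams in a
slit of width `w` equals the finite continued fraction `G'_w(t,q)`. -/
theorem secant_pathDiagrams_eq_continuedFraction (w : ℕ) :
    secantGF w = Gcf' w := by
  rw [← V_eq_Gcf]
  refine PowerSeries.ext fun n => ?_
  rw [secantGF, V, PowerSeries.coeff_mk, PowerSeries.coeff_mk]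
  by_cases hn : n % 2 = 0
  · rw [if_pos hn, secantGF_coeff w (n/2), show 2 * (n/2) = n by omega]
  · rw [if_neg hn]
    exact (cnt_parity w n 0 (by omega)).symm
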